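/- For every t > 0, the function r ↦ √(4r + 2t) − √(r + t) − √r is nonnegative and Lebesgue integrable on (0, ∞), and ∫_0^∞ (√(4r + 2t) − √(r + t) − √r) dr = (2/3)(1 − 1/√2) t^{3/2}. -/

import Mathlib

open MeasureTheory Real Set Filter Topology

lemma stmt4_aux_deriv (c d r : ℝ) (h : 0 < c * r + d) :
    HasDerivAt (fun x => (c * x + d) * Real.sqrt (c * x + d))
      ((3/2) * c * Real.sqrt (c * r + d)) r := by
  have hu : HasDerivAt (fun x => c * x + d) c r := by
    simpa using ((hasDerivAt_id r).const_mul c).add_const d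
  have hs : HasDerivAt (fun x => Real.sqrt (c * x + d)) (1 / (2 * Real.sqrt (c * r + d)) * c) r :=
    (Real.hasDerivAt_sqrt h.ne').comp r hu
  have hm := hu.mul hs
  refine HasDerivAt.congr_deriv hm ?_; symm
  have h0 : Real.sqrt (c * r + d) ≠ 0 := by positivity
  have hsq2 : Real.sqrt (c * r + d) ^ 2 = c * r + d := Real.sq_sqrt h.le
  field_simp
  linear_combination c * hsq2

lemma stmt4_aux_h (c r : ℝ) (hc : 0 < c) (hr : 0 < r) :
    0 ≤ (r + c) * Real.sqrt (r + c) - r * Real.sqrt r - (3/2) * c * Real.sqrt r ∧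
    (r + c) * Real.sqrt (r + c) - r * Real.sqrt r - (3/2) * c * Real.sqrt r
      ≤ (3/4) * c ^ 2 / Real.sqrt r := by
  set B := Real.sqrt (r + c) with hB
  set C := Real.sqrt r with hCdef
  have hB2 : B * B = r + c := Real.mul_self_sqrt (by linarith)
  have hC2 : C * C = r := Real.mul_self_sqrt hr.le
  have hC : 0 < C := Real.sqrt_pos.2 hr
  have hCB : C ≤ B := Real.sqrt_le_sqrt (by linarith)
  have hcc : c = B * B - C * C := by linarith
  constructor
  · rw [← hB2, ← hC2, hcc]
    nlinarith [mul_nonneg (sq_nonneg (B - C)) (by linarith : (0:ℝ) ≤ 2 * B + C)]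
  · rw [← hB2, ← hC2, hcc, le_div_iff₀ hC]
    nlinarith [mul_nonneg (sq_nonneg (B - C)) (by nlinarith : (0:ℝ) ≤ 3 * B^2 + 2 * B * C + C^2)]

lemma stmt4_aux_sqrt_atTop : Tendsto Real.sqrt atTop atTop := by
  refine tendsto_atTop.2 fun b => ?_
  filter_upwards [eventually_ge_atTop (b ^ 2)] with r h1
  calc b ≤ |b| := le_abs_self b
  _ = Real.sqrt (b ^ 2) := (Real.sqrt_sq_eq_abs b).symm
  _ ≤ Real.sqrt r := Real.sqrt_le_sqrt h1

lemma stmt4_aux_sqrt4 : Real.sqrt 4 = 2 := by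
  rw [show (4:ℝ) = 2 ^ 2 by norm_num, Real.sqrt_sq (by norm_num)]

lemma stmt4_aux_tendsto (t : ℝ) (ht : 0 < t) :
    Tendsto (fun r => (1/6) * ((4 * r + 2 * t) * Real.sqrt (4 * r + 2 * t))
        - (2/3) * ((r + t) * Real.sqrt (r + t)) - (2/3) * (r * Real.sqrt r))
      atTop (𝓝 0) := by
  have hb : Tendsto (fun r => t ^ 2 / Real.sqrt r) atTop (𝓝 0) :=
    tendsto_const_nhds.div_atTop stmt4_aux_sqrt_atTop
  refine squeeze_zero_norm' ?_ hb
  filter_upwards [eventually_gt_atTop (0:ℝ)] with r hr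
  have hsr : 0 < Real.sqrt r := Real.sqrt_pos.2 hr
  obtain ⟨h11, h12⟩ := stmt4_aux_h (t/2) r (by linarith) hr
  obtain ⟨h21, h22⟩ := stmt4_aux_h t r ht hr
  have key : (1/6) * ((4 * r + 2 * t) * Real.sqrt (4 * r + 2 * t))
        - (2/3) * ((r + t) * Real.sqrt (r + t)) - (2/3) * (r * Real.sqrt r)
      = (4/3) * ((r + t/2) * Real.sqrt (r + t/2) - r * Real.sqrt r - (3/2) * (t/2) * Real.sqrt r)
        - (2/3) * ((r + t) * Real.sqrt (r + t) - r * Real.sqrt r - (3/2) * t * Real.sqrt r) := by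
    have h4 : Real.sqrt (4 * r + 2 * t) = 2 * Real.sqrt (r + t/2) := by
      rw [show (4:ℝ) * r + 2 * t = 4 * (r + t/2) by ring,
        Real.sqrt_mul (by norm_num : (0:ℝ) ≤ 4), stmt4_aux_sqrt4]
    rw [h4]; ring
  rw [key, Real.norm_eq_abs, abs_le]
  rw [le_div_iff₀ hsr] at h12 h22
  constructor
  · rw [neg_le, le_div_iff₀ hsr]
    nlinarith [mul_nonneg h11 hsr.le, mul_nonneg h21 hsr.le, sq_nonneg t]
  · rw [le_div_iff₀ hsr]
    nlinarith [mul_nonneg h11 hsr.le, mul_nonneg h21 hsr.le, sq_nonneg t]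

theorem stmt4 (t : ℝ) (ht : 0 < t) :
    (∀ r ∈ Set.Ioi (0:ℝ),
        0 ≤ Real.sqrt (4 * r + 2 * t) - Real.sqrt (r + t) - Real.sqrt r) ∧
    IntegrableOn (fun r => Real.sqrt (4 * r + 2 * t) - Real.sqrt (r + t) - Real.sqrt r)
      (Set.Ioi 0) ∧
    ∫ r in Set.Ioi (0:ℝ),
        (Real.sqrt (4 * r + 2 * t) - Real.sqrt (r + t) - Real.sqrt r)
      = (2 / 3) * (1 - 1 / Real.sqrt 2) * t ^ ((3:ℝ)/2) := by
  set g : ℝ → ℝ := fun r => (1/6) * ((4 * r + 2 * t) * Real.sqrt (4 * r + 2 * t))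
        - (2/3) * ((r + t) * Real.sqrt (r + t)) - (2/3) * (r * Real.sqrt r) with hg
  set f : ℝ → ℝ := fun r => Real.sqrt (4 * r + 2 * t) - Real.sqrt (r + t) - Real.sqrt r with hf
  have hnn : ∀ r ∈ Set.Ioi (0:ℝ), 0 ≤ f r := by
    intro r hr
    simp only [Set.mem_Ioi] at hr
    have h1 : Real.sqrt (r + t) + Real.sqrt r ≤ Real.sqrt (4 * r + 2 * t) := by
      have hkey : (Real.sqrt (r + t) + Real.sqrt r) ^ 2 ≤ 4 * r + 2 * t := by
        nlinarith [Real.sq_sqrt (by linarith : (0:ℝ) ≤ r + t), Real.sq_sqrt hr.le,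
          sq_nonneg (Real.sqrt (r + t) - Real.sqrt r)]
      calc Real.sqrt (r + t) + Real.sqrt r
          = Real.sqrt ((Real.sqrt (r + t) + Real.sqrt r) ^ 2) :=
            (Real.sqrt_sq (by positivity)).symm
        _ ≤ Real.sqrt (4 * r + 2 * t) := Real.sqrt_le_sqrt hkey
    simp only [hf]; linarith
  have hcont : ContinuousWithinAt g (Set.Ici 0) 0 := by
    apply Continuous.continuousWithinAt
    fun_prop
  have hderiv : ∀ x ∈ Set.Ioi (0:ℝ), HasDerivAt g (f x) x := by
    intro x hx
    simp only [Set.mem_Ioi] at hx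
    have h1 := stmt4_aux_deriv 4 (2*t) x (by linarith)
    have h2 := stmt4_aux_deriv 1 t x (by linarith)
    have h3 := stmt4_aux_deriv 1 0 x (by linarith)
    simp only [one_mul, add_zero] at h2 h3
    have := ((h1.const_mul (1/6:ℝ)).sub (h2.const_mul (2/3:ℝ))).sub (h3.const_mul (2/3:ℝ))
    refine HasDerivAt.congr_deriv this ?_; simp only [hf]
    ring
  have htend := stmt4_aux_tendsto t ht
  have hInt : IntegrableOn f (Set.Ioi 0) :=
    integrableOn_Ioi_deriv_of_nonneg hcont hderiv hnn htend
  have hval := integral_Ioi_of_hasDerivAt_of_nonneg hcont hderiv hnn htend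
  refine ⟨hnn, hInt, ?_⟩
  rw [hval]
  have hg0 : g 0 = (1/6) * ((2 * t) * (Real.sqrt 2 * Real.sqrt t)) - (2/3) * (t * Real.sqrt t) := by
    simp only [hg]
    rw [show (4:ℝ) * 0 + 2 * t = 2 * t by ring, Real.sqrt_mul (by norm_num : (0:ℝ) ≤ 2),
      Real.sqrt_zero]
    ring_nf
  have ht32 : t ^ ((3:ℝ)/2) = t * Real.sqrt t := by
    rw [show ((3:ℝ)/2) = 1 + 1/2 by norm_num, Real.rpow_add ht, Real.rpow_one,
      ← Real.sqrt_eq_rpow]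
  rw [hg0, ht32]
  have h2 : Real.sqrt 2 * Real.sqrt 2 = 2 := Real.mul_self_sqrt (by norm_num)
  have h2p : Real.sqrt 2 ≠ 0 := by positivity
  field_simp
  linear_combination (-6 * t * Real.sqrt t) * h2
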